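/- arXiv:1109.2445 — 2 statements merged into one kernel-verified Lean document; each statement's English description precedes it below -/
import Mathlib

section
/- Assume that for every finite bipartite simple graph H, every integer M ≥ 1, every permutation voltage assignment on H and the resulting M-cover H̃ with natural projection π, the coefficientwise inequality Π(p(H̃)) ⪯ p(H)^M holds between multivariate independence polynomials. Then for every finite simple graph G with attractive interactions (J_{uv} ≥ 0 for all edges uv, h arbitrary), every integer M ≥ 1, and every M-cover G̃ of G carrying the induced interactions, one has Z(G̃) ≤ Z(G)^M. -/
open scoped Classical

/-- Multivariate independence polynomial of `G`: sum over independent sets `I`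
of `∏ v ∈ I, X v`. -/
noncomputable def indepPoly {V : Type} [Fintype V] (G : SimpleGraph V) :
    MvPolynomial V ℝ :=
  ∑ I ∈ Finset.univ.filter (fun I : Finset V => ∀ u ∈ I, ∀ v ∈ I, ¬ G.Adj u v),
    ∏ v ∈ I, MvPolynomial.X v

/-- A permutation voltage assignment on `G` with values in `S_M`:
`α u v = (α v u)⁻¹` on directed edges, and (as a normalization) `α u v = 1`
on non-adjacent pairs. -/
def IsVoltage {V : Type} (G : SimpleGraph V) (M : ℕ)
    (α : V → V → Equiv.Perm (Fin M)) : Prop :=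
  (∀ u v, G.Adj u v → α v u = (α u v)⁻¹) ∧ (∀ u v, ¬ G.Adj u v → α u v = 1)

/-- The `M`-cover of `G` determined by a voltage assignment `α`:
`(u,k)` is adjacent to `(v,l)` exactly when `u ~ v` in `G` and `l = α u v k`. -/
def cover {V : Type} (G : SimpleGraph V) (M : ℕ)
    (α : V → V → Equiv.Perm (Fin M)) : SimpleGraph (V × Fin M) :=
  SimpleGraph.fromRel (fun p q => G.Adj p.1 q.1 ∧ q.2 = α p.1 q.1 p.2)

/-- Partition function of the binary pairwise model on `G` with interactions `J, h`. -/
noncomputable def partitionZ {V : Type} [Fintype V] (G : SimpleGraph V)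
    (J : Sym2 V → ℝ) (h : V → ℝ) : ℝ :=
  ∑ s : V → Bool, Real.exp
    ((∑ e ∈ G.edgeFinset,
        J e * Sym2.lift ⟨fun u v => (if s u then (1:ℝ) else 0) * (if s v then (1:ℝ) else 0),
          fun u v => by ring⟩ e)
      + ∑ v, h v * (if s v then (1:ℝ) else 0))

/-- The subdivision graph `G'` of `G`: vertices `V ⊔ E`, with `v ∈ V` adjacent to
`e ∈ E` exactly when `v` is an endpoint of `e`. -/
def subdivision {V : Type} (G : SimpleGraph V) : SimpleGraph (V ⊕ G.edgeSet) :=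
  SimpleGraph.fromRel (fun a b =>
    ∃ (v : V) (e : G.edgeSet), a = Sum.inl v ∧ b = Sum.inr e ∧ v ∈ (e : Sym2 V))

open Finset

noncomputable def weightSum {V : Type} [Fintype V] (G : SimpleGraph V) (x : V → ℝ) : ℝ :=
  ∑ I ∈ Finset.univ.filter (fun I : Finset V => ∀ u ∈ I, ∀ v ∈ I, ¬ G.Adj u v),
    ∏ v ∈ I, x v

lemma eval_indepPoly {V : Type} [Fintype V] (G : SimpleGraph V) (x : V → ℝ) :
    MvPolynomial.eval x (indepPoly G) = weightSum G x := by
  simp [indepPoly, weightSum]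

lemma eval_le_of_coeff_le {σ : Type*} {p q : MvPolynomial σ ℝ}
    (h : ∀ m, MvPolynomial.coeff m p ≤ MvPolynomial.coeff m q)
    (x : σ → ℝ) (hx : ∀ i, 0 ≤ x i) :
    MvPolynomial.eval x p ≤ MvPolynomial.eval x q := by
  have h0 : 0 ≤ MvPolynomial.eval x (q - p) := by
    rw [MvPolynomial.eval_eq]
    refine Finset.sum_nonneg fun d _ => ?_
    refine mul_nonneg ?_ (Finset.prod_nonneg fun i _ => pow_nonneg (hx i) _)
    have := h d
    simp only [MvPolynomial.coeff_sub]
    linarith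
  rw [map_sub] at h0
  linarith

lemma sigma_eq {V : Type} (s : V → Bool) (e : Sym2 V) :
    Sym2.lift ⟨fun u v => (if s u then (1:ℝ) else 0) * (if s v then (1:ℝ) else 0),
          fun u v => by ring⟩ e = if (∀ v ∈ e, s v = true) then 1 else 0 := by
  induction e using Sym2.ind with
  | _ u v =>
    rw [Sym2.lift_mk]
    by_cases hu : s u = true <;> by_cases hv : s v = true
    · rw [if_pos]
      · simp [hu, hv]
      · intro w hw
        rcases Sym2.mem_iff.mp hw with rfl | rfl
        · exact hu
        · exact hv
    · have hn : ¬ (∀ w ∈ s(u, v), s w = true) :=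
        fun hA => hv (hA v (Sym2.mem_mk_right u v))
      rw [if_neg hn]; simp [hu, hv]
    · have hn : ¬ (∀ w ∈ s(u, v), s w = true) :=
        fun hA => hu (hA u (Sym2.mem_mk_left u v))
      rw [if_neg hn]; simp [hu, hv]
    · have hn : ¬ (∀ w ∈ s(u, v), s w = true) :=
        fun hA => hu (hA u (Sym2.mem_mk_left u v))
      rw [if_neg hn]; simp [hu, hv]

lemma prod_edgeFinset {V : Type} [Fintype V] (G : SimpleGraph V) (f : Sym2 V → ℝ) :
    ∏ e ∈ G.edgeFinset, f e = ∏ e : G.edgeSet, f e := by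
  rw [← Finset.prod_coe_sort G.edgeFinset]
  exact Fintype.prod_equiv (Equiv.subtypeEquivRight (by simp)).symm _ _ (fun x => rfl)

lemma partitionZ_expand {V : Type} [Fintype V] (G : SimpleGraph V)
    (J : Sym2 V → ℝ) (h : V → ℝ) :
    partitionZ G J h = (∏ v, Real.exp (h v)) *
      ∑ F : Finset G.edgeSet, ∑ S : Finset V,
        (if ∀ v ∈ S, ¬ ∃ e ∈ F, v ∈ (e : Sym2 V) then
          (∏ e ∈ F, (Real.exp (J (e : Sym2 V)) - 1)) * ∏ v ∈ S, Real.exp (-h v)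
        else 0) := by
  calc partitionZ G J h
      = ∑ s : V → Bool, (∏ e : G.edgeSet,
          (1 + (Real.exp (J (e : Sym2 V)) - 1) *
            (if (∀ v ∈ (e : Sym2 V), s v = true) then 1 else 0)))
          * ∏ v, Real.exp (h v * (if s v then (1:ℝ) else 0)) := by
        unfold partitionZ
        refine Finset.sum_congr rfl fun s _ => ?_
        rw [Real.exp_add, Real.exp_sum, Real.exp_sum, prod_edgeFinset]
        congr 1
        refine Finset.prod_congr rfl fun e _ => ?_
        rw [sigma_eq]
        split_ifs with hc
        · rw [mul_one, mul_one]; ring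
        · rw [mul_zero, mul_zero, Real.exp_zero, add_zero]
    _ = ∑ F : Finset G.edgeSet, (∏ e ∈ F, (Real.exp (J (e : Sym2 V)) - 1)) *
          ∏ v, (if (∃ e ∈ F, v ∈ (e : Sym2 V)) then Real.exp (h v)
                else (Real.exp (h v) + 1)) := by
        -- expand the edge product into a sum over subsets F
        have expand : ∀ s : V → Bool,
            (∏ e : G.edgeSet,
              (1 + (Real.exp (J (e : Sym2 V)) - 1) *
                (if (∀ v ∈ (e : Sym2 V), s v = true) then 1 else 0)))
            = ∑ F : Finset G.edgeSet, ∏ e ∈ F,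
                ((Real.exp (J (e : Sym2 V)) - 1) *
                  (if (∀ v ∈ (e : Sym2 V), s v = true) then 1 else 0)) := by
          intro s
          have := Finset.prod_add
            (fun e : G.edgeSet => (Real.exp (J (e : Sym2 V)) - 1) *
              (if (∀ v ∈ (e : Sym2 V), s v = true) then 1 else 0))
            (fun _ => (1:ℝ)) Finset.univ
          simp only [Finset.prod_const_one, mul_one, Finset.powerset_univ] at this
          rw [← this]
          refine Finset.prod_congr rfl fun e _ => by ring
        simp only [expand, Finset.sum_mul]
        rw [Finset.sum_comm]
        refine Finset.sum_congr rfl fun F _ => ?_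
        -- now fixed F : sum over s
        have key : ∀ s : V → Bool,
            (∏ e ∈ F, ((Real.exp (J (e : Sym2 V)) - 1) *
              (if (∀ v ∈ (e : Sym2 V), s v = true) then 1 else 0)))
            * ∏ v, Real.exp (h v * (if s v then (1:ℝ) else 0))
            = (∏ e ∈ F, (Real.exp (J (e : Sym2 V)) - 1)) *
              ∏ v, ((if ((∃ e ∈ F, v ∈ (e : Sym2 V)) → s v = true) then (1:ℝ) else 0)
                * Real.exp (h v * (if s v then (1:ℝ) else 0))) := by
          intro s
          rw [Finset.prod_mul_distrib, Finset.prod_mul_distrib, Finset.prod_boole,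
            Fintype.prod_boole]
          have hiff : (∀ e ∈ F, ∀ v ∈ (e : Sym2 V), s v = true) ↔
              (∀ v, (∃ e ∈ F, v ∈ (e : Sym2 V)) → s v = true) := by
            constructor
            · rintro H v ⟨e, he, hv⟩; exact H e he v hv
            · intro H e he v hv; exact H v ⟨e, he, hv⟩
          simp only [hiff]
          ring
        simp only [key, ← Finset.mul_sum]
        congr 1
        -- sum over s of product over v factors
        rw [← Fintype.piFinset_univ,
          Finset.sum_prod_piFinset (univ : Finset Bool)
            (fun (v : V) (b : Bool) =>
              (if ((∃ e ∈ F, v ∈ (e : Sym2 V)) → b = true) then (1:ℝ) else 0)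
                * Real.exp (h v * (if b then (1:ℝ) else 0)))]
        refine Finset.prod_congr rfl fun v _ => ?_
        by_cases hv : ∃ e ∈ F, v ∈ (e : Sym2 V) <;>
          simp [Fintype.univ_bool, hv]
    _ = (∏ v, Real.exp (h v)) *
      ∑ F : Finset G.edgeSet, ∑ S : Finset V,
        (if ∀ v ∈ S, ¬ ∃ e ∈ F, v ∈ (e : Sym2 V) then
          (∏ e ∈ F, (Real.exp (J (e : Sym2 V)) - 1)) * ∏ v ∈ S, Real.exp (-h v)
        else 0) := by
        rw [Finset.mul_sum]
        refine Finset.sum_congr rfl fun F _ => ?_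
        have split : ∏ v, (if (∃ e ∈ F, v ∈ (e : Sym2 V)) then Real.exp (h v)
                else (Real.exp (h v) + 1))
            = (∏ v, Real.exp (h v)) *
              ∏ v, ((if (∃ e ∈ F, v ∈ (e : Sym2 V)) then 0 else Real.exp (-h v)) + 1) := by
          rw [← Finset.prod_mul_distrib]
          refine Finset.prod_congr rfl fun v _ => ?_
          split_ifs with hv
          · ring
          · rw [mul_add, mul_one, ← Real.exp_add]
            simp [add_comm]
        rw [split]
        have expand2 : (∏ v, ((if (∃ e ∈ F, v ∈ (e : Sym2 V)) then (0:ℝ)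
              else Real.exp (-h v)) + 1))
            = ∑ S : Finset V, ∏ v ∈ S,
                (if (∃ e ∈ F, v ∈ (e : Sym2 V)) then (0:ℝ) else Real.exp (-h v)) := by
          have := Finset.prod_add
            (fun v => (if (∃ e ∈ F, v ∈ (e : Sym2 V)) then (0:ℝ) else Real.exp (-h v)))
            (fun _ => (1:ℝ)) Finset.univ
          simp only [Finset.prod_const_one, mul_one, Finset.powerset_univ] at this
          rw [this]
        rw [expand2]
        rw [mul_left_comm, Finset.mul_sum]
        congr 1
        refine Finset.sum_congr rfl fun S _ => ?_
        split_ifs with hc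
        · congr 1
          exact Finset.prod_congr rfl fun v hv => if_neg (hc v hv)
        · push_neg at hc
          obtain ⟨v, hv, hP⟩ := hc
          have hz : (∏ w ∈ S, if ∃ e ∈ F, w ∈ (e : Sym2 V) then (0:ℝ)
              else Real.exp (-h w)) = 0 :=
            Finset.prod_eq_zero hv (if_pos hP)
          rw [hz, mul_zero]

lemma cover_adj {V : Type} (G : SimpleGraph V) (M : ℕ)
    (α : V → V → Equiv.Perm (Fin M)) (hα : IsVoltage G M α) (p q : V × Fin M) :
    (cover G M α).Adj p q ↔ G.Adj p.1 q.1 ∧ q.2 = α p.1 q.1 p.2 := by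
  constructor
  · rintro ⟨hne, (⟨ha, hk⟩ | ⟨ha, hk⟩)⟩
    · exact ⟨ha, hk⟩
    · refine ⟨ha.symm, ?_⟩
      rw [hα.1 p.1 q.1 ha.symm] at hk
      rw [hk]; simp
  · rintro ⟨ha, hk⟩
    exact ⟨fun he => (G.ne_of_adj ha) (congrArg Prod.fst he), Or.inl ⟨ha, hk⟩⟩

lemma subdivision_adj {V : Type} (G : SimpleGraph V) (a b : V ⊕ G.edgeSet) :
    (subdivision G).Adj a b ↔
      (∃ (v : V) (e : G.edgeSet),
        (a = Sum.inl v ∧ b = Sum.inr e ∨ b = Sum.inl v ∧ a = Sum.inr e)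
        ∧ v ∈ (e : Sym2 V)) := by
  constructor
  · rintro ⟨hne, (⟨v, e, h1, h2, h3⟩ | ⟨v, e, h1, h2, h3⟩)⟩
    · exact ⟨v, e, Or.inl ⟨h1, h2⟩, h3⟩
    · exact ⟨v, e, Or.inr ⟨h1, h2⟩, h3⟩
  · rintro ⟨v, e, (⟨h1, h2⟩ | ⟨h1, h2⟩), h3⟩
    · exact ⟨by rw [h1, h2]; simp, Or.inl ⟨v, e, h1, h2, h3⟩⟩
    · exact ⟨by rw [h1, h2]; simp, Or.inr ⟨v, e, h1, h2, h3⟩⟩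

lemma subdiv_adj_inl_inl {V : Type} (G : SimpleGraph V) (v w : V) :
    ¬ (subdivision G).Adj (Sum.inl v) (Sum.inl w) := by
  rw [subdivision_adj]
  rintro ⟨_, _, (⟨_, h⟩ | ⟨_, h⟩), _⟩ <;> exact Sum.inl_ne_inr h

lemma subdiv_adj_inr_inr {V : Type} (G : SimpleGraph V) (e f : G.edgeSet) :
    ¬ (subdivision G).Adj (Sum.inr e) (Sum.inr f) := by
  rw [subdivision_adj]
  rintro ⟨_, _, (⟨h, _⟩ | ⟨h, _⟩), _⟩ <;> simp at h

lemma subdiv_adj_inl_inr {V : Type} (G : SimpleGraph V) (v : V) (e : G.edgeSet) :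
    (subdivision G).Adj (Sum.inl v) (Sum.inr e) ↔ v ∈ (e : Sym2 V) := by
  rw [subdivision_adj]
  constructor
  · rintro ⟨w, f, (⟨h1, h2⟩ | ⟨h1, h2⟩), h3⟩
    · cases Sum.inl.inj h1; cases Sum.inr.inj h2; exact h3
    · exact absurd h1 (by simp)
  · intro hv; exact ⟨v, e, Or.inl ⟨rfl, rfl⟩, hv⟩

-- facts about Quot.out on Sym2
lemma sym2_out_eq {V : Type} (e : Sym2 V) : Sym2.mk (Quot.out e).1 (Quot.out e).2 = e := Quot.out_eq e

lemma mem_out_iff {V : Type} (v : V) (e : Sym2 V) :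
    v ∈ e ↔ v = (Quot.out e).1 ∨ v = (Quot.out e).2 := by
  conv_lhs => rw [← sym2_out_eq e]
  exact Sym2.mem_iff

lemma adj_out {V : Type} (G : SimpleGraph V) (e : G.edgeSet) :
    G.Adj (Quot.out (e : Sym2 V)).1 (Quot.out (e : Sym2 V)).2 := by
  have := e.2
  rw [← sym2_out_eq (e : Sym2 V)] at this
  exact this

/-- The induced voltage assignment on the subdivision graph. -/
noncomputable def volt {V : Type} (G : SimpleGraph V) (M : ℕ)
    (α : V → V → Equiv.Perm (Fin M)) :
    (V ⊕ G.edgeSet) → (V ⊕ G.edgeSet) → Equiv.Perm (Fin M) :=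
  fun a b => match a, b with
  | Sum.inl v, Sum.inr e =>
      if v = (Quot.out (e : Sym2 V)).2
      then (α (Quot.out (e : Sym2 V)).1 (Quot.out (e : Sym2 V)).2)⁻¹ else 1
  | Sum.inr e, Sum.inl v =>
      if v = (Quot.out (e : Sym2 V)).2
      then α (Quot.out (e : Sym2 V)).1 (Quot.out (e : Sym2 V)).2 else 1
  | Sum.inl _, Sum.inl _ => 1
  | Sum.inr _, Sum.inr _ => 1

lemma volt_isVoltage {V : Type} (G : SimpleGraph V) (M : ℕ)
    (α : V → V → Equiv.Perm (Fin M)) :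
    IsVoltage (subdivision G) M (volt G M α) := by
  constructor
  · rintro (v | e) (w | f) hadj
    · exact absurd hadj (subdiv_adj_inl_inl G v w)
    · show volt G M α _ _ = _
      simp only [volt]
      split_ifs <;> simp
    · show volt G M α _ _ = _
      simp only [volt]
      split_ifs <;> simp
    · exact absurd hadj (subdiv_adj_inr_inr G e f)
  · rintro (v | e) (w | f) hadj
    · rfl
    · rw [subdiv_adj_inl_inr] at hadj
      show volt G M α _ _ = 1
      simp only [volt]
      rw [if_neg]
      intro hv
      exact hadj (hv ▸ ((mem_out_iff _ _).mpr (Or.inr rfl)))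
    · have hadj' : ¬ (subdivision G).Adj (Sum.inl w) (Sum.inr e) :=
        fun hc => hadj hc.symm
      rw [subdiv_adj_inl_inr] at hadj'
      show volt G M α _ _ = 1
      simp only [volt]
      rw [if_neg]
      intro hv
      exact hadj' (hv ▸ ((mem_out_iff _ _).mpr (Or.inr rfl)))
    · rfl

/-- Index of a cover edge in the fibre over its projection. -/
noncomputable def covIdx {V : Type} {M : ℕ} (et : Sym2 (V × Fin M)) : Fin M :=
  if (Quot.out et).1.1 = (Quot.out (Sym2.map Prod.fst et)).1
  then (Quot.out et).1.2 else (Quot.out et).2.2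

lemma cover_edge_form {V : Type} (G : SimpleGraph V) (M : ℕ)
    (α : V → V → Equiv.Perm (Fin M)) (hα : IsVoltage G M α)
    (et : Sym2 (V × Fin M)) (het : et ∈ (cover G M α).edgeSet) :
    G.Adj (Quot.out (Sym2.map Prod.fst et)).1 (Quot.out (Sym2.map Prod.fst et)).2 ∧
    et = s(((Quot.out (Sym2.map Prod.fst et)).1, covIdx et),
          ((Quot.out (Sym2.map Prod.fst et)).2,
            α (Quot.out (Sym2.map Prod.fst et)).1 (Quot.out (Sym2.map Prod.fst et)).2
              (covIdx et))) := by
  set p := Quot.out et with hp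
  have hmk : Sym2.mk p.1 p.2 = et := sym2_out_eq et
  have hadj : (cover G M α).Adj p.1 p.2 := by
    rw [← SimpleGraph.mem_edgeSet]
    convert het
  rw [cover_adj G M α hα] at hadj
  obtain ⟨hGadj, hsnd⟩ := hadj
  have hmape : Sym2.map Prod.fst et = s(p.1.1, p.2.1) := by
    rw [← hmk]
    exact Sym2.map_pair_eq Prod.fst p.1 p.2
  set q := Quot.out (Sym2.map Prod.fst et) with hq
  have hqmk : Sym2.mk q.1 q.2 = s(p.1.1, p.2.1) := by
    rw [hq, sym2_out_eq, hmape]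
  have hne : p.1.1 ≠ p.2.1 := G.ne_of_adj hGadj
  have hcase : (q.1 = p.1.1 ∧ q.2 = p.2.1) ∨ (q.1 = p.2.1 ∧ q.2 = p.1.1) := by
    have := Sym2.eq_iff.mp hqmk
    tauto
  rcases hcase with ⟨h1, h2⟩ | ⟨h1, h2⟩
  · have hidx : covIdx et = p.1.2 := by
      rw [covIdx, ← hp, ← hq, if_pos h1.symm]
    refine ⟨by rw [h1, h2]; exact hGadj, ?_⟩
    rw [hidx, h1, h2, ← hsnd]
    rw [← hmk]
  · have hidx : covIdx et = p.2.2 := by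
      rw [covIdx, ← hp, ← hq, if_neg (by rw [h1]; exact hne)]
    refine ⟨by rw [h1, h2]; exact hGadj.symm, ?_⟩
    have hinv : α p.2.1 p.1.1 p.2.2 = p.1.2 := by
      rw [hα.1 p.1.1 p.2.1 hGadj, hsnd]
      simp
    rw [hidx, h1, h2, hinv, ← hmk, Sym2.eq_swap]

lemma map_fst_mem {V : Type} (G : SimpleGraph V) (M : ℕ)
    (α : V → V → Equiv.Perm (Fin M)) (hα : IsVoltage G M α)
    (et : Sym2 (V × Fin M)) (het : et ∈ (cover G M α).edgeSet) :
    Sym2.map Prod.fst et ∈ G.edgeSet := by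
  have h := (cover_edge_form G M α hα et het).1
  rw [← sym2_out_eq (Sym2.map Prod.fst et)]
  exact h

/-- The bijection between vertices of the subdivision of the cover and
vertices of the cover of the subdivision. -/
noncomputable def coverEquiv {V : Type} (G : SimpleGraph V) (M : ℕ)
    (α : V → V → Equiv.Perm (Fin M)) (hα : IsVoltage G M α) :
    ((V × Fin M) ⊕ (cover G M α).edgeSet) ≃ ((V ⊕ G.edgeSet) × Fin M) where
  toFun a := match a with
    | Sum.inl (v, k) => (Sum.inl v, k)
    | Sum.inr et => (Sum.inr ⟨Sym2.map Prod.fst (et : Sym2 (V × Fin M)),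
        map_fst_mem G M α hα _ et.2⟩, covIdx (et : Sym2 (V × Fin M)))
  invFun b := match b with
    | (Sum.inl v, k) => Sum.inl (v, k)
    | (Sum.inr e, k) => Sum.inr ⟨s(((Quot.out (e : Sym2 V)).1, k),
        ((Quot.out (e : Sym2 V)).2,
          α (Quot.out (e : Sym2 V)).1 (Quot.out (e : Sym2 V)).2 k)),
        ((cover G M α).mem_edgeSet).mpr
          ((cover_adj G M α hα _ _).mpr ⟨adj_out G e, rfl⟩)⟩
  left_inv a := by
    match a with
    | Sum.inl (v, k) => rfl
    | Sum.inr et =>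
      simp only []
      congr 1
      exact Subtype.ext (cover_edge_form G M α hα _ et.2).2.symm
  right_inv b := by
    match b with
    | (Sum.inl v, k) => rfl
    | (Sum.inr e, k) =>
      simp only []
      set q := Quot.out (e : Sym2 V) with hq
      have hadj := adj_out G e
      set et : Sym2 (V × Fin M) := s((q.1, k), (q.2, α q.1 q.2 k)) with het
      have hmap : Sym2.map Prod.fst et = (e : Sym2 V) := by
        rw [het, Sym2.map_pair_eq]
        exact sym2_out_eq _
      have hidx : covIdx et = k := by
        have hmk : Sym2.mk (Quot.out et).1 (Quot.out et).2 = et := sym2_out_eq et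
        have h2 : Sym2.mk (Quot.out et).1 (Quot.out et).2
            = Sym2.mk (q.1, k) (q.2, α q.1 q.2 k) := by
          rw [hmk, het]
        rcases (Sym2.mk_eq_mk_iff (p := Quot.out et) (q := ((q.1, k), (q.2, α q.1 q.2 k)))).mp h2 with hcase | hcase
        · simp only [covIdx]
          rw [hmap, hcase, ← hq]
          simp
        · simp only [covIdx]
          rw [hmap, hcase, ← hq]
          simp only [Prod.swap_prod_mk, Prod.fst_swap]
          rw [if_neg hadj.ne']
      refine Prod.ext ?_ ?_
      · simp only []
        congr 1
        exact Subtype.ext hmap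
      · exact hidx

lemma coverEquiv_adj {V : Type} (G : SimpleGraph V) (M : ℕ)
    (α : V → V → Equiv.Perm (Fin M)) (hα : IsVoltage G M α)
    (a b : (V × Fin M) ⊕ (cover G M α).edgeSet) :
    (subdivision (cover G M α)).Adj a b ↔
      (cover (subdivision G) M (volt G M α)).Adj
        (coverEquiv G M α hα a) (coverEquiv G M α hα b) := by
  have hvolt := volt_isVoltage G M α
  -- the main asymmetric case
  have main : ∀ (v : V) (k : Fin M) (et : (cover G M α).edgeSet),
      ((subdivision (cover G M α)).Adj (Sum.inl (v, k)) (Sum.inr et) ↔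
      (cover (subdivision G) M (volt G M α)).Adj
        (coverEquiv G M α hα (Sum.inl (v, k))) (coverEquiv G M α hα (Sum.inr et))) := by
    intro v k et
    obtain ⟨hGadj, hform⟩ := cover_edge_form G M α hα (et : Sym2 (V × Fin M)) et.2
    set q := Quot.out (Sym2.map Prod.fst (et : Sym2 (V × Fin M))) with hq
    set i := covIdx (et : Sym2 (V × Fin M)) with hi
    have LHS : (subdivision (cover G M α)).Adj (Sum.inl (v, k)) (Sum.inr et) ↔
        ((v, k) = (q.1, i) ∨ (v, k) = (q.2, α q.1 q.2 i)) := by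
      rw [subdiv_adj_inl_inr]
      conv_lhs => rw [hform]
      exact Sym2.mem_iff
    rw [LHS]
    show _ ↔ (cover (subdivision G) M (volt G M α)).Adj (Sum.inl v, k)
      (Sum.inr ⟨Sym2.map Prod.fst (et : Sym2 (V × Fin M)), _⟩, i)
    rw [cover_adj _ _ _ hvolt]
    simp only [subdiv_adj_inl_inr]
    have hmem : v ∈ (Sym2.map Prod.fst (et : Sym2 (V × Fin M))) ↔ (v = q.1 ∨ v = q.2) :=
      mem_out_iff v _
    have hvolt_val : volt G M α (Sum.inl v)
        (Sum.inr ⟨Sym2.map Prod.fst (et : Sym2 (V × Fin M)),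
          map_fst_mem G M α hα _ et.2⟩)
        = if v = q.2 then (α q.1 q.2)⁻¹ else 1 := rfl
    constructor
    · rintro (heq | heq) <;>
        obtain ⟨rfl, rfl⟩ := Prod.mk.injEq .. ▸ (Prod.ext_iff.mp heq)
      · refine ⟨hmem.mpr (Or.inl rfl), ?_⟩
        rw [hvolt_val, if_neg (G.ne_of_adj hGadj)]
        rfl
      · refine ⟨hmem.mpr (Or.inr rfl), ?_⟩
        rw [hvolt_val, if_pos rfl]
        simp
    · rintro ⟨hv, hk⟩
      rw [hvolt_val] at hk
      rcases hmem.mp hv with rfl | rfl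
      · rw [if_neg (G.ne_of_adj hGadj)] at hk
        left
        rw [Prod.ext_iff]
        exact ⟨rfl, hk.symm⟩
      · rw [if_pos rfl] at hk
        right
        rw [Prod.ext_iff]
        refine ⟨rfl, ?_⟩
        have := congrArg (α q.1 q.2) hk
        simpa using this.symm
  match a, b with
  | Sum.inl (v, k), Sum.inl (w, l) =>
    refine iff_of_false (subdiv_adj_inl_inl _ _ _) ?_
    rw [cover_adj _ _ _ hvolt]
    rintro ⟨hc, -⟩
    exact subdiv_adj_inl_inl _ _ _ hc
  | Sum.inl (v, k), Sum.inr et => exact main v k et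
  | Sum.inr et, Sum.inl (v, k) =>
    exact ⟨fun hx => ((main v k et).mp hx.symm).symm,
      fun hx => ((main v k et).mpr hx.symm).symm⟩
  | Sum.inr et, Sum.inr ft =>
    refine iff_of_false (subdiv_adj_inr_inr _ _ _) ?_
    rw [cover_adj _ _ _ hvolt]
    rintro ⟨hc, -⟩
    exact subdiv_adj_inr_inr _ _ _ hc

lemma weightSum_map {A B : Type} [Fintype A] [Fintype B]
    (G : SimpleGraph A) (H : SimpleGraph B) (φ : A ≃ B)
    (hadj : ∀ a b, G.Adj a b ↔ H.Adj (φ a) (φ b))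
    (x : A → ℝ) (y : B → ℝ) (hxy : ∀ a, x a = y (φ a)) :
    weightSum G x = weightSum H y := by
  unfold weightSum
  refine Finset.sum_nbij' (fun I => I.map φ.toEmbedding)
    (fun I => I.map φ.symm.toEmbedding) ?_ ?_ ?_ ?_ ?_
  · intro I hI
    simp only [Finset.mem_filter, Finset.mem_univ, true_and] at hI ⊢
    intro u hu v hv
    rw [Finset.mem_map_equiv] at hu hv
    intro hadj'
    refine hI _ hu _ hv ?_
    rw [hadj]
    simpa using hadj'
  · intro I hI
    simp only [Finset.mem_filter, Finset.mem_univ, true_and] at hI ⊢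
    intro u hu v hv
    rw [Finset.mem_map_equiv] at hu hv
    intro hadj'
    refine hI _ hu _ hv ?_
    rw [hadj] at hadj'
    simpa using hadj'
  · intro I _
    simp [Finset.map_map, Finset.map_eq_image, Finset.image_image]
  · intro I _
    simp [Finset.map_map, Finset.map_eq_image, Finset.image_image]
  · intro I _
    rw [Finset.prod_map]
    exact Finset.prod_congr rfl fun a _ => hxy a

lemma sum_pairs_eq_weightSum {V : Type} [Fintype V] (G : SimpleGraph V)
    (x : V → ℝ) (y : G.edgeSet → ℝ) :
    (∑ F : Finset G.edgeSet, ∑ S : Finset V,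
      (if ∀ v ∈ S, ¬ ∃ e ∈ F, v ∈ (e : Sym2 V) then
        (∏ e ∈ F, y e) * ∏ v ∈ S, x v else 0))
    = weightSum (subdivision G) (Sum.elim x y) := by
  rw [← Finset.sum_product']
  rw [Finset.univ_product_univ]
  rw [← Finset.sum_filter]
  unfold weightSum
  refine Finset.sum_nbij' (fun p => p.2.disjSum p.1) (fun I => (I.toRight, I.toLeft))
    ?_ ?_ ?_ ?_ ?_
  · rintro ⟨F, S⟩ hp
    simp only [Finset.mem_filter, Finset.mem_univ, true_and] at hp ⊢
    rintro a ha b hb hadj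
    rw [subdivision_adj] at hadj
    obtain ⟨v, e, (⟨h1, h2⟩ | ⟨h1, h2⟩), h3⟩ := hadj
    · subst h1; subst h2
      exact hp v (Finset.inl_mem_disjSum.mp ha) ⟨e, Finset.inr_mem_disjSum.mp hb, h3⟩
    · subst h1; subst h2
      exact hp v (Finset.inl_mem_disjSum.mp hb) ⟨e, Finset.inr_mem_disjSum.mp ha, h3⟩
  · intro I hI
    simp only [Finset.mem_filter, Finset.mem_univ, true_and] at hI ⊢
    rintro v hv ⟨e, he, hve⟩
    rw [Finset.mem_toLeft] at hv
    rw [Finset.mem_toRight] at he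
    refine hI _ hv _ he ?_
    rw [subdiv_adj_inl_inr]
    exact hve
  · rintro ⟨F, S⟩ _
    simp
  · intro I _
    simp [Finset.toLeft_disjSum_toRight]
  · rintro ⟨F, S⟩ hp
    simp only [Finset.mem_filter, Finset.mem_univ, true_and] at hp
    show _ = ∏ v ∈ S.disjSum F, Sum.elim x y v
    rw [← Finset.map_inl_disjUnion_map_inr, Finset.prod_disjUnion,
      Finset.prod_map, Finset.prod_map]
    simp only [Function.Embedding.coeFn_mk, Sum.elim_inl, Sum.elim_inr]
    rw [mul_comm]
    rfl

lemma subdivision_colorable {V : Type} (G : SimpleGraph V) :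
    (subdivision G).Colorable 2 := by
  refine ⟨⟨fun a => Sum.elim (fun _ => 0) (fun _ => 1) a, ?_⟩⟩
  intro a b hab
  rw [subdivision_adj] at hab
  obtain ⟨v, e, (⟨h1, h2⟩ | ⟨h1, h2⟩), -⟩ := hab <;> subst h1 <;> subst h2 <;> simp

/-- If `Π(p(H̃)) ⪯ p(H)^M` for every finite bipartite graph `H` and
every `M`-cover `H̃`, then `Z(G̃) ≤ Z(G)^M` for every attractive model on a graph `G`
and every `M`-cover `G̃` with induced interactions. -/
theorem stmt0
    (hyp : ∀ (W : Type) [Fintype W] (H : SimpleGraph W), H.Colorable 2 →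
      ∀ M : ℕ, 1 ≤ M → ∀ β : W → W → Equiv.Perm (Fin M), IsVoltage H M β →
      ∀ m : W →₀ ℕ,
        MvPolynomial.coeff m
            (MvPolynomial.rename Prod.fst (indepPoly (cover H M β)))
          ≤ MvPolynomial.coeff m ((indepPoly H) ^ M))
    {V : Type} [Fintype V] (G : SimpleGraph V) (J : Sym2 V → ℝ) (h : V → ℝ)
    (hJ : ∀ e ∈ G.edgeSet, 0 ≤ J e)
    (M : ℕ) (hM : 1 ≤ M)
    (α : V → V → Equiv.Perm (Fin M)) (hα : IsVoltage G M α) :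
    partitionZ (cover G M α) (fun e => J (Sym2.map Prod.fst e)) (fun p => h p.1)
      ≤ (partitionZ G J h) ^ M := by
  classical
  have hvolt := volt_isVoltage G M α
  -- the weight function on the subdivision of `G`
  set x : V ⊕ G.edgeSet → ℝ :=
    Sum.elim (fun v => Real.exp (-h v))
      (fun e : G.edgeSet => Real.exp (J (e : Sym2 V)) - 1) with hxdef
  have hnn : ∀ i, 0 ≤ x i := by
    rintro (v | e)
    · exact (Real.exp_pos _).le
    · have h1 := Real.add_one_le_exp (J (e : Sym2 V))
      have h2 := hJ (e : Sym2 V) e.2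
      simp only [hxdef, Sum.elim_inr]
      linarith
  -- decomposition of Z(G)
  have hZG : partitionZ G J h
      = (∏ v, Real.exp (h v)) * weightSum (subdivision G) x := by
    rw [partitionZ_expand, sum_pairs_eq_weightSum]
  -- decomposition of Z of the cover
  have hZC : partitionZ (cover G M α) (fun e => J (Sym2.map Prod.fst e)) (fun p => h p.1)
      = (∏ p : V × Fin M, Real.exp (h p.1)) *
        weightSum (subdivision (cover G M α))
          (Sum.elim (fun p : V × Fin M => Real.exp (-h p.1))
            (fun et : (cover G M α).edgeSet =>
              Real.exp (J (Sym2.map Prod.fst (et : Sym2 (V × Fin M)))) - 1)) := by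
    rw [partitionZ_expand, sum_pairs_eq_weightSum]
  -- transfer along the isomorphism
  have htrans : weightSum (subdivision (cover G M α))
          (Sum.elim (fun p : V × Fin M => Real.exp (-h p.1))
            (fun et : (cover G M α).edgeSet =>
              Real.exp (J (Sym2.map Prod.fst (et : Sym2 (V × Fin M)))) - 1))
      = weightSum (cover (subdivision G) M (volt G M α)) (x ∘ Prod.fst) := by
    refine weightSum_map _ _ (coverEquiv G M α hα) (coverEquiv_adj G M α hα) _ _ ?_
    rintro (⟨v, k⟩ | et) <;> rfl
  -- the hypothesis gives the key inequality
  have hcoef := hyp (V ⊕ G.edgeSet) (subdivision G) (subdivision_colorable G) M hM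
    (volt G M α) hvolt
  have hle : weightSum (cover (subdivision G) M (volt G M α)) (x ∘ Prod.fst)
      ≤ (weightSum (subdivision G) x) ^ M := by
    have h0 := eval_le_of_coeff_le hcoef x hnn
    rwa [MvPolynomial.eval_rename, map_pow, eval_indepPoly, eval_indepPoly] at h0
  -- the prefactor over the cover
  have hprod : (∏ p : V × Fin M, Real.exp (h p.1)) = (∏ v, Real.exp (h v)) ^ M := by
    rw [Fintype.prod_prod_type]
    simp only [Finset.prod_const, Finset.card_univ, Fintype.card_fin]
    rw [Finset.prod_pow]
  rw [hZC, htrans, hprod, hZG, mul_pow]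
  exact mul_le_mul_of_nonneg_left hle
    (pow_nonneg (Finset.prod_nonneg fun v _ => (Real.exp_pos _).le) M)
end

section
/- Let G = (V,E) be a finite simple graph, M ≥ 1, and let G̃ be the M-cover of G determined by a permutation voltage assignment α. Then the subdivision graph (G̃)′ of G̃ is isomorphic to an M-cover of the subdivision graph G′ of G: there is a permutation voltage assignment β on G′ and a graph isomorphism from (G̃)′ to the M-cover of G′ determined by β which commutes with the natural projections to G′. -/
open scoped Classical

section Aux
variable {V : Type} (G : SimpleGraph V) (M : ℕ) (α : V → V → Equiv.Perm (Fin M))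

noncomputable def erep (e : G.edgeSet) : V × V := Quot.out e.val

lemma erep_mk (e : G.edgeSet) : s((erep G e).1, (erep G e).2) = e.val := by
  rw [erep]; exact Quot.out_eq e.val

lemma erep_adj (e : G.edgeSet) : G.Adj (erep G e).1 (erep G e).2 := by
  rw [← SimpleGraph.mem_edgeSet, erep_mk]; exact e.prop

lemma erep_ne (e : G.edgeSet) : (erep G e).1 ≠ (erep G e).2 := (erep_adj G e).ne

lemma mem_e_iff (e : G.edgeSet) (v : V) :
    v ∈ e.val ↔ v = (erep G e).1 ∨ v = (erep G e).2 := by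
  rw [← erep_mk G e, Sym2.mem_iff]

-- subdivision adjacency
lemma subdiv_adj_iff (v : V) (e : G.edgeSet) :
    (subdivision G).Adj (Sum.inl v) (Sum.inr e) ↔ v ∈ e.val := by
  simp [subdivision, SimpleGraph.fromRel_adj]

lemma subdiv_not_adj_ll (v w : V) : ¬ (subdivision G).Adj (Sum.inl v) (Sum.inl w) := by
  simp [subdivision, SimpleGraph.fromRel_adj]

lemma subdiv_not_adj_rr (e f : G.edgeSet) : ¬ (subdivision G).Adj (Sum.inr e) (Sum.inr f) := by
  simp [subdivision, SimpleGraph.fromRel_adj]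

-- cover adjacency
lemma cover_adj_iff {W : Type} (H : SimpleGraph W) (γ : W → W → Equiv.Perm (Fin M))
    (hγ : IsVoltage H M γ) (p q : W × Fin M) :
    (cover H M γ).Adj p q ↔ p ≠ q ∧ H.Adj p.1 q.1 ∧ q.2 = γ p.1 q.1 p.2 := by
  rw [cover, SimpleGraph.fromRel_adj]
  constructor
  · rintro ⟨hne, h | ⟨hadj, h⟩⟩
    · exact ⟨hne, h⟩
    · refine ⟨hne, hadj.symm, ?_⟩
      rw [hγ.1 q.1 p.1 hadj]
      simp [h]
  · rintro ⟨hne, hadj, h⟩; exact ⟨hne, Or.inl ⟨hadj, h⟩⟩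

end Aux

section Main
variable {V : Type} (G : SimpleGraph V) (M : ℕ) (α : V → V → Equiv.Perm (Fin M))

/-- voltage on the subdivision graph -/
noncomputable def βdef : (V ⊕ G.edgeSet) → (V ⊕ G.edgeSet) → Equiv.Perm (Fin M) :=
  fun a b => match a, b with
  | Sum.inl v, Sum.inr e => if v ∈ e.val then
      (if v = (erep G e).1 then 1 else (α (erep G e).1 (erep G e).2)⁻¹) else 1
  | Sum.inr e, Sum.inl v => if v ∈ e.val then
      (if v = (erep G e).1 then 1 else (α (erep G e).1 (erep G e).2)) else 1
  | _, _ => 1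

lemma βdef_isVoltage : IsVoltage (subdivision G) M (βdef G M α) := by
  constructor
  · rintro (v | e) (w | f) hadj
    · exact absurd hadj (subdiv_not_adj_ll G v w)
    · rw [subdiv_adj_iff] at hadj
      simp only [βdef, if_pos hadj]
      split <;> simp
    · rw [SimpleGraph.adj_comm, subdiv_adj_iff] at hadj
      simp only [βdef, if_pos hadj]
      split <;> simp
    · exact absurd hadj (subdiv_not_adj_rr G e f)
  · rintro (v | e) (w | f) hnadj
    · rfl
    · rw [subdiv_adj_iff] at hnadj
      simp only [βdef, if_neg hnadj]
    · rw [SimpleGraph.adj_comm, subdiv_adj_iff] at hnadj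
      simp only [βdef, if_neg hnadj]
    · rfl

lemma proj_mem (ee : (cover G M α).edgeSet) : Sym2.map Prod.fst ee.val ∈ G.edgeSet := by
  obtain ⟨e, he⟩ := ee
  induction e using Sym2.ind with
  | _ p q =>
    rw [SimpleGraph.mem_edgeSet, cover, SimpleGraph.fromRel_adj] at he
    rw [Sym2.map_pair_eq, SimpleGraph.mem_edgeSet]
    rcases he.2 with ⟨h, _⟩ | ⟨h, _⟩
    · exact h
    · exact h.symm

noncomputable def eproj (ee : (cover G M α).edgeSet) : G.edgeSet :=
  ⟨Sym2.map Prod.fst ee.val, proj_mem G M α ee⟩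

lemma key_exists_unique (hα : IsVoltage G M α) (ee : (cover G M α).edgeSet) :
    ∃! k : Fin M, ee.val =
      s(((erep G (eproj G M α ee)).1, k),
        ((erep G (eproj G M α ee)).2,
          α (erep G (eproj G M α ee)).1 (erep G (eproj G M α ee)).2 k)) := by
  set u₁ := (erep G (eproj G M α ee)).1 with hu1
  set u₂ := (erep G (eproj G M α ee)).2 with hu2
  have hne : u₁ ≠ u₂ := erep_ne G _
  have hadj : G.Adj u₁ u₂ := erep_adj G _
  have hout : s(u₁, u₂) = Sym2.map Prod.fst ee.val := erep_mk G (eproj G M α ee)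
  obtain ⟨e, he⟩ := ee
  -- he : e ∈ edgeSet
  induction e using Sym2.ind with
  | _ p q =>
    rw [SimpleGraph.mem_edgeSet, cover_adj_iff M G α hα] at he
    obtain ⟨hpq, hGadj, hperm⟩ := he
    simp only [Sym2.map_pair_eq] at hout
    rw [Sym2.eq_iff] at hout
    refine existsUnique_of_exists_of_unique ?_ ?_
    · rcases hout with ⟨h1, h2⟩ | ⟨h1, h2⟩
      · refine ⟨p.2, ?_⟩
        rw [Sym2.eq_iff]
        left
        constructor
        · rw [h1]
        · rw [h1, h2, ← hperm]
      · -- u₁ = q.1, u₂ = p.1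
        refine ⟨q.2, ?_⟩
        rw [Sym2.eq_iff]
        right
        constructor
        · rw [h1, h2, hα.1 p.1 q.1 hGadj, hperm]
          simp
        · rw [h1]
    · intro k1 k2 h1 h2
      rw [h1, Sym2.eq_iff] at h2
      rcases h2 with ⟨h, _⟩ | ⟨h, _⟩
      · exact (Prod.mk.injEq .. ▸ h).2.symm ▸ ((Prod.ext_iff.mp h).2).symm
      · exact absurd (Prod.ext_iff.mp h).1 hne

noncomputable def key (hα : IsVoltage G M α) (ee : (cover G M α).edgeSet) : Fin M :=
  (key_exists_unique G M α hα ee).exists.choose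

lemma key_spec (hα : IsVoltage G M α) (ee : (cover G M α).edgeSet) :
    ee.val = s(((erep G (eproj G M α ee)).1, key G M α hα ee),
        ((erep G (eproj G M α ee)).2,
          α (erep G (eproj G M α ee)).1 (erep G (eproj G M α ee)).2 (key G M α hα ee))) :=
  (key_exists_unique G M α hα ee).exists.choose_spec

lemma key_unique (hα : IsVoltage G M α) (ee : (cover G M α).edgeSet) (k : Fin M)
    (h : ee.val = s(((erep G (eproj G M α ee)).1, k),
        ((erep G (eproj G M α ee)).2,
          α (erep G (eproj G M α ee)).1 (erep G (eproj G M α ee)).2 k))) :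
    key G M α hα ee = k :=
  ((key_exists_unique G M α hα ee).unique (key_spec G M α hα ee) h)

lemma build_mem (hα : IsVoltage G M α) (e : G.edgeSet) (k : Fin M) :
    s(((erep G e).1, k), ((erep G e).2, α (erep G e).1 (erep G e).2 k))
      ∈ (cover G M α).edgeSet := by
  rw [SimpleGraph.mem_edgeSet, cover_adj_iff M G α hα]
  refine ⟨?_, erep_adj G e, rfl⟩
  intro h
  exact erep_ne G e (Prod.ext_iff.mp h).1

noncomputable def buildE (hα : IsVoltage G M α) (e : G.edgeSet) (k : Fin M) : (cover G M α).edgeSet :=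
  ⟨s(((erep G e).1, k), ((erep G e).2, α (erep G e).1 (erep G e).2 k)),
    build_mem G M α hα e k⟩

lemma eproj_buildE (hα : IsVoltage G M α) (e : G.edgeSet) (k : Fin M) :
    eproj G M α (buildE G M α hα e k) = e := by
  apply Subtype.ext
  simp only [eproj, buildE, Sym2.map_pair_eq]
  exact erep_mk G e

lemma key_buildE (hα : IsVoltage G M α) (e : G.edgeSet) (k : Fin M) :
    key G M α hα (buildE G M α hα e k) = k := by
  apply key_unique
  rw [eproj_buildE G M α hα e k]
  rfl

end Main

section Iso
variable {V : Type} (G : SimpleGraph V) (M : ℕ) (α : V → V → Equiv.Perm (Fin M))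
  (hα : IsVoltage G M α)

noncomputable def φequiv :
    ((V × Fin M) ⊕ (cover G M α).edgeSet) ≃ ((V ⊕ G.edgeSet) × Fin M) where
  toFun x := match x with
    | Sum.inl p => (Sum.inl p.1, p.2)
    | Sum.inr ee => (Sum.inr (eproj G M α ee), key G M α hα ee)
  invFun p := match p with
    | (Sum.inl v, k) => Sum.inl (v, k)
    | (Sum.inr e, k) => Sum.inr (buildE G M α hα e k)
  left_inv x := by
    match x with
    | Sum.inl p => rfl
    | Sum.inr ee =>
      simp only []
      congr 1
      apply Subtype.ext
      exact (key_spec G M α hα ee).symm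
  right_inv p := by
    match p with
    | (Sum.inl v, k) => rfl
    | (Sum.inr e, k) =>
      simp only []
      rw [eproj_buildE G M α hα e k, key_buildE G M α hα e k]

lemma central (p : V × Fin M) (ee : (cover G M α).edgeSet) :
    (cover (subdivision G) M (βdef G M α)).Adj (Sum.inl p.1, p.2)
      (Sum.inr (eproj G M α ee), key G M α hα ee) ↔ p ∈ ee.val := by
  rw [cover_adj_iff M (subdivision G) (βdef G M α) (βdef_isVoltage G M α)]
  have hne : ((Sum.inl p.1 : V ⊕ G.edgeSet), p.2) ≠
      (Sum.inr (eproj G M α ee), key G M α hα ee) := by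
    intro h
    exact Sum.inl_ne_inr (Prod.ext_iff.mp h).1
  set u₁ := (erep G (eproj G M α ee)).1 with hu1
  set u₂ := (erep G (eproj G M α ee)).2 with hu2
  have hneu : u₁ ≠ u₂ := erep_ne G _
  have hspec := key_spec G M α hα ee
  have hmem : p ∈ ee.val ↔ p = (u₁, key G M α hα ee) ∨
      p = (u₂, α u₁ u₂ (key G M α hα ee)) := by
    rw [hspec, Sym2.mem_iff]
  rw [hmem]
  rw [subdiv_adj_iff, mem_e_iff]
  by_cases h1 : p.1 = u₁
  · have hβ : βdef G M α (Sum.inl p.1) (Sum.inr (eproj G M α ee)) = 1 := by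
      simp only [βdef, mem_e_iff]
      rw [if_pos (Or.inl h1), if_pos h1]
    rw [hβ]
    simp only [Equiv.Perm.one_apply]
    constructor
    · rintro ⟨-, -, hk⟩
      left
      rw [Prod.ext_iff]
      exact ⟨h1, hk.symm⟩
    · rintro (hp | hp)
      · refine ⟨hne, Or.inl h1, ?_⟩
        rw [Prod.ext_iff] at hp
        exact hp.2.symm
      · exact absurd (h1.symm.trans (Prod.ext_iff.mp hp).1) hneu
  · by_cases h2 : p.1 = u₂
    · have hβ : βdef G M α (Sum.inl p.1) (Sum.inr (eproj G M α ee)) = (α u₁ u₂)⁻¹ := by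
        simp only [βdef, mem_e_iff]
        rw [if_pos (Or.inr h2), if_neg h1]
      rw [hβ]
      constructor
      · rintro ⟨-, -, hk⟩
        right
        rw [Prod.ext_iff]
        refine ⟨h2, ?_⟩
        show p.2 = α u₁ u₂ (key G M α hα ee)
        have hk' : key G M α hα ee = (α u₁ u₂)⁻¹ p.2 := hk
        rw [hk']
        simp
      · rintro (hp | hp)
        · exact absurd (Prod.ext_iff.mp hp).1 h1
        · refine ⟨hne, Or.inr h2, ?_⟩
          rw [(Prod.ext_iff.mp hp).2]
          simp
    · constructor
      · rintro ⟨-, h | h, -⟩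
        · exact absurd h h1
        · exact absurd h h2
      · rintro (hp | hp)
        · exact absurd (Prod.ext_iff.mp hp).1 h1
        · exact absurd (Prod.ext_iff.mp hp).1 h2

lemma subdiv_cover_adj_iff (p : V × Fin M) (ee : (cover G M α).edgeSet) :
    (subdivision (cover G M α)).Adj (Sum.inl p) (Sum.inr ee) ↔ p ∈ ee.val :=
  subdiv_adj_iff (cover G M α) p ee

noncomputable def φiso :
    subdivision (cover G M α) ≃g cover (subdivision G) M (βdef G M α) where
  toEquiv := φequiv G M α hα
  map_rel_iff' := by
    intro a b
    match a, b with
    | Sum.inl p, Sum.inl q =>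
      constructor
      · intro h
        rw [cover_adj_iff M (subdivision G) (βdef G M α) (βdef_isVoltage G M α)] at h
        exact absurd h.2.1 (subdiv_not_adj_ll G p.1 q.1)
      · intro h
        exact absurd h (subdiv_not_adj_ll (cover G M α) p q)
    | Sum.inr ee, Sum.inr ff =>
      constructor
      · intro h
        rw [cover_adj_iff M (subdivision G) (βdef G M α) (βdef_isVoltage G M α)] at h
        exact absurd h.2.1 (subdiv_not_adj_rr G _ _)
      · intro h
        exact absurd h (subdiv_not_adj_rr (cover G M α) ee ff)
    | Sum.inl p, Sum.inr ee =>
      show (cover (subdivision G) M (βdef G M α)).Adj (Sum.inl p.1, p.2)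
        (Sum.inr (eproj G M α ee), key G M α hα ee) ↔ _
      rw [central G M α hα p ee, subdiv_cover_adj_iff]
    | Sum.inr ee, Sum.inl p =>
      show (cover (subdivision G) M (βdef G M α)).Adj
        (Sum.inr (eproj G M α ee), key G M α hα ee) (Sum.inl p.1, p.2) ↔ _
      have hc := central G M α hα p ee
      constructor
      · intro h
        exact ((subdiv_cover_adj_iff G M α p ee).mpr (hc.mp h.symm)).symm
      · intro h
        exact (hc.mpr ((subdiv_cover_adj_iff G M α p ee).mp h.symm)).symm

end Iso

/-- the subdivision of an `M`-cover of `G` is isomorphic to an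
`M`-cover of the subdivision `G'` of `G`, via an isomorphism commuting with the
natural projections to `G'` (compared inside `V ⊕ Sym2 V`). -/
theorem stmt10 {V : Type} [Fintype V] (G : SimpleGraph V) (M : ℕ) (hM : 1 ≤ M)
    (α : V → V → Equiv.Perm (Fin M)) (hα : IsVoltage G M α) :
    ∃ β : (V ⊕ G.edgeSet) → (V ⊕ G.edgeSet) → Equiv.Perm (Fin M),
      IsVoltage (subdivision G) M β ∧
      ∃ φ : subdivision (cover G M α) ≃g cover (subdivision G) M β,
        ∀ w : (V × Fin M) ⊕ (cover G M α).edgeSet,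
          Sum.map id Subtype.val (φ w).1
            = Sum.elim (fun p : V × Fin M => Sum.inl p.1)
                (fun e : (cover G M α).edgeSet =>
                  Sum.inr (Sym2.map Prod.fst e.val)) w := by
  refine ⟨βdef G M α, βdef_isVoltage G M α, φiso G M α hα, ?_⟩
  rintro (p | ee)
  · rfl
  · rfl
end
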